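/- Let I be a {0,1}^d-valued random vector, and let X and Y be obtained by the FGM construction with the same distribution of the Bernoulli vector but possibly different marginals: X_k = (1−I_k)X^[1]_k + I_k X^[2]_k with X^[1]_k of cdf 1−(1−F_k)^2 and X^[2]_k of cdf F_k^2, and Y_k = (1−I'_k)Y^[1]_k + I'_k Y^[2]_k with I' having the same distribution as I, Y^[1]_k of cdf 1−(1−G_k)^2 and Y^[2]_k of cdf G_k^2, each construction having its 2d+1 random elements mutually independent. If G_k(x) ≤ F_k(x) for all x ∈ ℝ and all k ∈ {1,...,d} (i.e., X_k ≤_{st} Y_k for each k), then E[ψ(X)] ≤ E[ψ(Y)] for every bounded Borel-measurable function ψ : ℝ^d → ℝ that is nondecreasing in each component; in particular X ≤_{st} Y in the multivariate usual stochastic order, and X_1 + ··· + X_d ≤_{st} Y_1 + ··· + Y_d. -/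

import Mathlib

open MeasureTheory ProbabilityTheory
open scoped ENNReal

/-- Codomains of the `2d+1` random elements in the FGM construction. -/
def fgmType (d : ℕ) : Option (Fin d × Fin 2) → Type
  | none => Fin d → Fin 2
  | some _ => ℝ

instance fgmTypeMeasurableSpace (d : ℕ) (o : Option (Fin d × Fin 2)) :
    MeasurableSpace (fgmType d o) := by
  cases o with
  | none => exact (inferInstance : MeasurableSpace (Fin d → Fin 2))
  | some p => exact (inferInstance : MeasurableSpace ℝ)

lemma upperSet_meas_le {μ ν : Measure ℝ} [IsProbabilityMeasure μ] [IsProbabilityMeasure ν]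
    (h : ∀ x, ν (Set.Iic x) ≤ μ (Set.Iic x)) {S : Set ℝ}
    (hup : ∀ ⦃a b : ℝ⦄, a ∈ S → a ≤ b → b ∈ S) : μ S ≤ ν S := by
  have hIio : ∀ x : ℝ, ν (Set.Iio x) ≤ μ (Set.Iio x) := by
    intro x
    have hmono : Monotone (fun n : ℕ => Set.Iic (x - ((n : ℝ) + 1)⁻¹)) := by
      intro m n hmn
      apply Set.Iic_subset_Iic.mpr
      have h1 : ((n : ℝ) + 1)⁻¹ ≤ ((m : ℝ) + 1)⁻¹ := by
        apply inv_anti₀ (by positivity)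
        have := (Nat.cast_le (α := ℝ)).mpr hmn
        linarith
      linarith
    have hU : Set.Iio x = ⋃ n : ℕ, Set.Iic (x - ((n : ℝ) + 1)⁻¹) := by
      ext y
      simp only [Set.mem_Iio, Set.mem_iUnion, Set.mem_Iic]
      constructor
      · intro hy
        obtain ⟨n, hn⟩ := exists_nat_one_div_lt (sub_pos.mpr hy)
        rw [one_div] at hn
        exact ⟨n, by linarith⟩
      · rintro ⟨n, hn⟩
        have : (0 : ℝ) < ((n : ℝ) + 1)⁻¹ := by positivity
        linarith
    rw [hU, hmono.directed_le.measure_iUnion, hmono.directed_le.measure_iUnion]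
    exact iSup_mono fun n => h _
  rcases Set.eq_empty_or_nonempty S with rfl | hne
  · simp
  by_cases hbb : BddBelow S
  · set c := sInf S with hc
    have hsub1 : Set.Ioi c ⊆ S := by
      intro y hy
      obtain ⟨s, hsS, hsy⟩ := (csInf_lt_iff hbb hne).mp hy
      exact hup hsS hsy.le
    have hsub2 : S ⊆ Set.Ici c := fun s hs => csInf_le hbb hs
    by_cases hcS : c ∈ S
    · have hS : S = Set.Ici c := Set.Subset.antisymm hsub2 (fun y hy => hup hcS hy)
      rw [hS, ← Set.compl_Iio, prob_compl_eq_one_sub measurableSet_Iio,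
        prob_compl_eq_one_sub measurableSet_Iio]
      exact tsub_le_tsub_left (hIio c) 1
    · have hS : S = Set.Ioi c := by
        refine Set.Subset.antisymm (fun s hs => ?_) hsub1
        exact (Set.mem_Ici.mp (hsub2 hs)).lt_of_ne (fun e => hcS (e ▸ hs))
      rw [hS, ← Set.compl_Iic, prob_compl_eq_one_sub measurableSet_Iic,
        prob_compl_eq_one_sub measurableSet_Iic]
      exact tsub_le_tsub_left (h c) 1
  · have hS : S = Set.univ := by
      ext y
      simp only [Set.mem_univ, iff_true]
      obtain ⟨s, hsS, hsy⟩ := not_bddBelow_iff.mp hbb y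
      exact hup hsS hsy.le
    simp [hS]

lemma lintegral_ofReal_mono_of_cdf {μ ν : Measure ℝ} [IsProbabilityMeasure μ]
    [IsProbabilityMeasure ν] (h : ∀ x, ν (Set.Iic x) ≤ μ (Set.Iic x)) {g : ℝ → ℝ}
    (hg0 : ∀ x, 0 ≤ g x) (hg : Monotone g) :
    ∫⁻ x, ENNReal.ofReal (g x) ∂μ ≤ ∫⁻ x, ENNReal.ofReal (g x) ∂ν := by
  rw [lintegral_eq_lintegral_meas_lt μ (Filter.Eventually.of_forall hg0)
      hg.measurable.aemeasurable,
    lintegral_eq_lintegral_meas_lt ν (Filter.Eventually.of_forall hg0)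
      hg.measurable.aemeasurable]
  refine lintegral_mono fun t => ?_
  exact upperSet_meas_le h (fun a b ha hab => lt_of_lt_of_le ha (hg hab))
open scoped ENNReal

lemma lmarginal_congr_meas {δ : Type*} [DecidableEq δ] {π : δ → Type*}
    [∀ i, MeasurableSpace (π i)] {μ ν : ∀ i, Measure (π i)} {s : Finset δ}
    (h : ∀ i ∈ s, μ i = ν i) (f : (∀ i, π i) → ℝ≥0∞) :
    (∫⋯∫⁻_s, f ∂μ) = (∫⋯∫⁻_s, f ∂ν) := by
  have he : (fun i : s => μ i) = fun i : s => ν i := funext fun i => h i i.2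
  unfold MeasureTheory.lmarginal
  rw [he]

lemma lintegral_pi_mono {δ : Type*} [Fintype δ] [DecidableEq δ] {π : δ → Type*}
    [∀ i, MeasurableSpace (π i)] (μ ν : ∀ i, Measure (π i))
    [∀ i, IsProbabilityMeasure (μ i)] [∀ i, IsProbabilityMeasure (ν i)]
    {f : (∀ i, π i) → ℝ≥0∞} (hf : Measurable f)
    (h : ∀ (i : δ) (x : ∀ j, π j),
      ∫⁻ t, f (Function.update x i t) ∂μ i ≤ ∫⁻ t, f (Function.update x i t) ∂ν i) :
    ∫⁻ x, f x ∂Measure.pi μ ≤ ∫⁻ x, f x ∂Measure.pi ν := by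
  haveI hne : ∀ i, Nonempty (π i) := by
    intro i
    by_contra hc
    rw [not_nonempty_iff] at hc
    have h1 : (μ i) Set.univ = 1 := measure_univ
    rw [Set.univ_eq_empty_iff.mpr hc, measure_empty] at h1
    exact zero_ne_one h1
  have key : ∀ s : Finset δ, ∀ x, (∫⋯∫⁻_s, f ∂μ) x ≤ (∫⋯∫⁻_s, f ∂ν) x := by
    intro s
    induction s using Finset.induction_on with
    | empty => intro x; simp
    | @insert i s hi IH =>
      intro x
      classical
      set κ : ∀ i, Measure (π i) := Function.update ν i (μ i) with hκ
      haveI hκprob : ∀ j, IsProbabilityMeasure (κ j) := by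
        intro j
        rcases eq_or_ne j i with rfl | hj
        · rw [hκ, Function.update_self]; infer_instance
        · rw [hκ, Function.update_of_ne hj]; infer_instance
      have hκi : κ i = μ i := Function.update_self _ _ _
      have hκs : ∀ j ∈ s, κ j = ν j := fun j hj =>
        Function.update_of_ne (by rintro rfl; exact hi hj) _ _
      calc (∫⋯∫⁻_insert i s, f ∂μ) x
          = ∫⁻ t, (∫⋯∫⁻_s, f ∂μ) (Function.update x i t) ∂μ i :=
            lmarginal_insert f hf hi x
        _ ≤ ∫⁻ t, (∫⋯∫⁻_s, f ∂ν) (Function.update x i t) ∂μ i :=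
            lintegral_mono fun t => IH _
        _ = (∫⋯∫⁻_insert i s, f ∂κ) x := by
            rw [lmarginal_insert f hf hi x, hκi, lmarginal_congr_meas hκs f]
        _ = (∫⋯∫⁻_s, (fun z => ∫⁻ t, f (Function.update z i t) ∂κ i) ∂κ) x := by
            rw [lmarginal_insert' f hf hi]
        _ = (∫⋯∫⁻_s, (fun z => ∫⁻ t, f (Function.update z i t) ∂μ i) ∂ν) x := by
            rw [hκi, lmarginal_congr_meas hκs]
        _ ≤ (∫⋯∫⁻_s, (fun z => ∫⁻ t, f (Function.update z i t) ∂ν i) ∂ν) x :=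
            lmarginal_mono (fun z => h i z) x
        _ = (∫⋯∫⁻_insert i s, f ∂ν) x := by rw [← lmarginal_insert' f hf hi]
  obtain ⟨x₀⟩ : Nonempty (∀ i, π i) := ⟨fun i => Classical.arbitrary _⟩
  rw [lintegral_eq_lmarginal_univ x₀, lintegral_eq_lmarginal_univ x₀]
  exact key Finset.univ x₀

lemma iIndepFun_map_pi {Ω ι : Type*} [Fintype ι] [MeasurableSpace Ω] {π : ι → Type*}
    [∀ i, MeasurableSpace (π i)] (P : Measure Ω) [IsProbabilityMeasure P]
    (f : ∀ i, Ω → π i) (hf : ∀ i, Measurable (f i))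
    (hind : iIndepFun f P) :
    Measure.map (fun ω i => f i ω) P = Measure.pi (fun i => Measure.map (f i) P) := by
  haveI : ∀ i, IsProbabilityMeasure (Measure.map (f i) P) := fun i =>
    Measure.isProbabilityMeasure_map (hf i).aemeasurable
  refine (Measure.pi_eq (μ := fun i => Measure.map (f i) P) fun s hs => ?_).symm
  rw [Measure.map_apply (measurable_pi_lambda _ hf) (MeasurableSet.univ_pi hs)]
  have hpre : (fun ω i => f i ω) ⁻¹' Set.pi Set.univ s = ⋂ i, f i ⁻¹' s i := by
    ext ω; simp [Set.mem_pi]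
  rw [hpre, hind.meas_iInter fun i => ⟨s i, hs i, rfl⟩]
  exact Finset.prod_congr rfl fun i _ => (Measure.map_apply (hf i) (hs i)).symm

lemma map_eq_of_fin {Ω α : Type*} [MeasurableSpace Ω] [Fintype α] [MeasurableSpace α]
    [MeasurableSingletonClass α] (P : Measure Ω) (I I' : Ω → α)
    (hI : Measurable I) (hI' : Measurable I')
    (hsame : ∀ a : α, P {ω | I ω = a} = P {ω | I' ω = a}) :
    Measure.map I P = Measure.map I' P := by
  classical
  ext s hs
  rw [Measure.map_apply hI hs, Measure.map_apply hI' hs]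
  have hgen : ∀ J : Ω → α, J ⁻¹' s = ⋃ a ∈ (Set.toFinite s).toFinset, J ⁻¹' {a} := by
    intro J
    ext ω
    simp only [Set.mem_preimage, Set.mem_iUnion, Set.Finite.mem_toFinset,
      Set.mem_singleton_iff]
    exact ⟨fun h => ⟨J ω, h, rfl⟩, fun ⟨a, ha, h⟩ => h ▸ ha⟩
  have h1 := hgen I
  have h1' := hgen I'
  have hd : ∀ (J : Ω → α), Set.PairwiseDisjoint (↑(Set.toFinite s).toFinset)
      (fun a => J ⁻¹' {a}) := by
    intro J a _ b _ hab
    refine Set.disjoint_left.mpr fun ω h1 h2 => hab ?_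
    have e1 : J ω = a := h1
    have e2 : J ω = b := h2
    rw [← e1, e2]
  rw [h1, h1', measure_biUnion_finset (hd I) fun a _ => hI (measurableSet_singleton a),
    measure_biUnion_finset (hd I') fun a _ => hI' (measurableSet_singleton a)]
  exact Finset.sum_congr rfl fun a _ => hsame a

def fgmI {d : ℕ} (v : ∀ o, fgmType d o) : Fin d → Fin 2 := v none

def fgmR {d : ℕ} (v : ∀ o, fgmType d o) (p : Fin d × Fin 2) : ℝ := v (some p)

def fgmCombine {d : ℕ} (v : ∀ o, fgmType d o) : Fin d → ℝ := fun k =>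
  (1 - ((fgmI v k : ℕ) : ℝ)) * fgmR v (k, 0) + ((fgmI v k : ℕ) : ℝ) * fgmR v (k, 1)

lemma fgmR_update {d : ℕ} (x : ∀ o, fgmType d o) (p q : Fin d × Fin 2) (t : ℝ) :
    fgmR (Function.update x (some p) t) q = if q = p then t else fgmR x q := by
  classical
  unfold fgmR
  rcases eq_or_ne q p with rfl | hq
  · simp; exact Function.update_self _ _ _
  · exact (Function.update_of_ne (by simp [hq]) _ _).trans (if_neg hq).symm

lemma fgmI_update {d : ℕ} (x : ∀ o, fgmType d o) (p : Fin d × Fin 2) (t : ℝ) :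
    fgmI (Function.update x (some p) t) = fgmI x := by
  classical
  unfold fgmI
  exact Function.update_of_ne (by simp) _ _

lemma fgmCombine_update_mono {d : ℕ} (x : ∀ o, fgmType d o) (p : Fin d × Fin 2) {t t' : ℝ}
    (h : t ≤ t') (k' : Fin d) :
    fgmCombine (Function.update x (some p) t) k' ≤ fgmCombine (Function.update x (some p) t') k' := by
  classical
  have hc0 : (0 : ℝ) ≤ ((fgmI x k' : ℕ) : ℝ) := Nat.cast_nonneg _
  have hc1 : ((fgmI x k' : ℕ) : ℝ) ≤ 1 := by
    have : (fgmI x k' : ℕ) ≤ 1 := Nat.lt_succ_iff.mp (fgmI x k').isLt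
    exact_mod_cast this
  unfold fgmCombine
  rw [fgmI_update, fgmI_update, fgmR_update, fgmR_update, fgmR_update, fgmR_update]
  by_cases h0 : ((k', (0 : Fin 2)) : Fin d × Fin 2) = p <;>
    by_cases h1 : ((k', (1 : Fin 2)) : Fin d × Fin 2) = p
  · exfalso
    have : ((k', (0 : Fin 2)) : Fin d × Fin 2) = (k', (1 : Fin 2)) := h0.trans h1.symm
    simp at this
  · rw [if_pos h0, if_pos h0, if_neg h1, if_neg h1]
    have := mul_le_mul_of_nonneg_left h (by linarith : (0:ℝ) ≤ 1 - ((fgmI x k' : ℕ) : ℝ))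
    linarith
  · rw [if_neg h0, if_neg h0, if_pos h1, if_pos h1]
    have := mul_le_mul_of_nonneg_left h hc0
    linarith
  · rw [if_neg h0, if_neg h0, if_neg h1, if_neg h1]

/-- The family consisting of the Bernoulli random vector `I` together with the `2d`
order-statistic components `X j k` (`j = 0`: minimum, `j = 1`: maximum). -/
def fgmFamily {Ω : Type*} (d : ℕ) (I : Ω → Fin d → Fin 2)
    (X : Fin 2 → Fin d → Ω → ℝ) : (o : Option (Fin d × Fin 2)) → Ω → fgmType d o
  | none => I
  | some p => X p.2 p.1

/-- Proposition 7.4 and (7.3): if two FGM random vectors share the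
same Bernoulli vector distribution (the same FGM copula) and the marginals are ordered
(`G_k ≤ F_k` pointwise, i.e. `X_k ≼_st Y_k`), then the vectors are ordered in the
multivariate usual stochastic order and so are the aggregate rvs. -/
theorem fgm_usual_stochastic_order {Ω : Type*} [MeasurableSpace Ω]
    (P : Measure Ω) [IsProbabilityMeasure P] (d : ℕ) (F G : Fin d → ℝ → ℝ)
    (I I' : Ω → Fin d → Fin 2) (X Y : Fin 2 → Fin d → Ω → ℝ)
    (hI : Measurable I) (hI' : Measurable I')
    (hX : ∀ j k, Measurable (X j k)) (hY : ∀ j k, Measurable (Y j k))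
    (hIndep : iIndepFun (fgmFamily d I X) P)
    (hIndep' : iIndepFun (fgmFamily d I' Y) P)
    (hsame : ∀ i : Fin d → Fin 2, P {ω | I ω = i} = P {ω | I' ω = i})
    (hXcdf_min : ∀ k x, (P {ω | X 0 k ω ≤ x}).toReal = 1 - (1 - F k x) ^ 2)
    (hXcdf_max : ∀ k x, (P {ω | X 1 k ω ≤ x}).toReal = (F k x) ^ 2)
    (hYcdf_min : ∀ k x, (P {ω | Y 0 k ω ≤ x}).toReal = 1 - (1 - G k x) ^ 2)
    (hYcdf_max : ∀ k x, (P {ω | Y 1 k ω ≤ x}).toReal = (G k x) ^ 2)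
    (hGF : ∀ k x, G k x ≤ F k x) :
    (∀ ψ : (Fin d → ℝ) → ℝ, Measurable ψ → (∃ C : ℝ, ∀ x, |ψ x| ≤ C) →
      (∀ a b : Fin d → ℝ, (∀ k, a k ≤ b k) → ψ a ≤ ψ b) →
      ∫ ω, ψ (fun k =>
          (1 - ((I ω k : ℕ) : ℝ)) * X 0 k ω + ((I ω k : ℕ) : ℝ) * X 1 k ω) ∂P
        ≤ ∫ ω, ψ (fun k =>
            (1 - ((I' ω k : ℕ) : ℝ)) * Y 0 k ω + ((I' ω k : ℕ) : ℝ) * Y 1 k ω) ∂P)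
    ∧ (∀ φ : ℝ → ℝ, Measurable φ → (∃ C : ℝ, ∀ x, |φ x| ≤ C) → Monotone φ →
      ∫ ω, φ (∑ k,
          ((1 - ((I ω k : ℕ) : ℝ)) * X 0 k ω + ((I ω k : ℕ) : ℝ) * X 1 k ω)) ∂P
        ≤ ∫ ω, φ (∑ k,
            ((1 - ((I' ω k : ℕ) : ℝ)) * Y 0 k ω + ((I' ω k : ℕ) : ℝ) * Y 1 k ω)) ∂P) := by
  classical
  have main : ∀ ψ : (Fin d → ℝ) → ℝ, Measurable ψ → (∃ C : ℝ, ∀ x, |ψ x| ≤ C) →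
      (∀ a b : Fin d → ℝ, (∀ k, a k ≤ b k) → ψ a ≤ ψ b) →
      ∫ ω, ψ (fun k =>
          (1 - ((I ω k : ℕ) : ℝ)) * X 0 k ω + ((I ω k : ℕ) : ℝ) * X 1 k ω) ∂P
        ≤ ∫ ω, ψ (fun k =>
            (1 - ((I' ω k : ℕ) : ℝ)) * Y 0 k ω + ((I' ω k : ℕ) : ℝ) * Y 1 k ω) ∂P := by
    rintro ψ hψm ⟨C, hC⟩ hψmono
    -- measurability of the family
    have hfamX : ∀ o, Measurable (fgmFamily d I X o) := by
      rintro (_ | p)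
      · exact hI
      · exact hX p.2 p.1
    have hfamY : ∀ o, Measurable (fgmFamily d I' Y o) := by
      rintro (_ | p)
      · exact hI'
      · exact hY p.2 p.1
    set μ : ∀ o, Measure (fgmType d o) := fun o => Measure.map (fgmFamily d I X o) P
      with hμdef
    set ν : ∀ o, Measure (fgmType d o) := fun o => Measure.map (fgmFamily d I' Y o) P
      with hνdef
    haveI hμp : ∀ o, IsProbabilityMeasure (μ o) := fun o =>
      Measure.isProbabilityMeasure_map (hfamX o).aemeasurable
    haveI hνp : ∀ o, IsProbabilityMeasure (ν o) := fun o =>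
      Measure.isProbabilityMeasure_map (hfamY o).aemeasurable
    have hmapX : Measure.map (fun ω o => fgmFamily d I X o ω) P = Measure.pi μ :=
      iIndepFun_map_pi P _ hfamX hIndep
    have hmapY : Measure.map (fun ω o => fgmFamily d I' Y o ω) P = Measure.pi ν :=
      iIndepFun_map_pi P _ hfamY hIndep'
    -- measurability of fgmCombine
    have hfgmI : Measurable (fgmI (d := d)) := measurable_pi_apply none
    have hfgmR : ∀ p : Fin d × Fin 2, Measurable (fun v => fgmR (d := d) v p) := fun p =>
      measurable_pi_apply (some p)
    have hcoef : ∀ k : Fin d,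
        Measurable (fun v : ∀ o, fgmType d o => ((fgmI v k : ℕ) : ℝ)) := by
      intro k
      have h1 : Measurable (fun u : Fin d → Fin 2 => ((u k : ℕ) : ℝ)) :=
        measurable_of_countable _
      exact h1.comp hfgmI
    have hcombm : Measurable (fgmCombine (d := d)) := by
      apply measurable_pi_lambda
      intro k
      exact ((measurable_const.sub (hcoef k)).mul (hfgmR (k, 0))).add
        ((hcoef k).mul (hfgmR (k, 1)))
    -- rewriting the two integrals
    have hrwX : ∫ ω, ψ (fun k =>
          (1 - ((I ω k : ℕ) : ℝ)) * X 0 k ω + ((I ω k : ℕ) : ℝ) * X 1 k ω) ∂P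
        = ∫ v, ψ (fgmCombine v) ∂(Measure.pi μ) := by
      have hae : AEStronglyMeasurable (fun v : ∀ o, fgmType d o => ψ (fgmCombine v))
          (Measure.map (fun ω o => fgmFamily d I X o ω) P) :=
        (hψm.comp hcombm).aestronglyMeasurable
      rw [← hmapX, integral_map (measurable_pi_lambda _ hfamX).aemeasurable hae]
      rfl
    have hrwY : ∫ ω, ψ (fun k =>
          (1 - ((I' ω k : ℕ) : ℝ)) * Y 0 k ω + ((I' ω k : ℕ) : ℝ) * Y 1 k ω) ∂P
        = ∫ v, ψ (fgmCombine v) ∂(Measure.pi ν) := by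
      have hae : AEStronglyMeasurable (fun v : ∀ o, fgmType d o => ψ (fgmCombine v))
          (Measure.map (fun ω o => fgmFamily d I' Y o ω) P) :=
        (hψm.comp hcombm).aestronglyMeasurable
      rw [← hmapY, integral_map (measurable_pi_lambda _ hfamY).aemeasurable hae]
      rfl
    -- boundedness facts
    have hg0 : ∀ v : ∀ o, fgmType d o, 0 ≤ ψ (fgmCombine v) + C := fun v => by
      have := abs_le.mp (hC (fgmCombine v)); linarith
    have hgle : ∀ v : ∀ o, fgmType d o, ψ (fgmCombine v) + C ≤ 2 * C := fun v => by
      have := abs_le.mp (hC (fgmCombine v)); linarith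
    have hgm : Measurable (fun v : ∀ o, fgmType d o => ψ (fgmCombine v) + C) :=
      (hψm.comp hcombm).add measurable_const
    -- link between integral and lintegral
    have hlink : ∀ (π : Measure (∀ o, fgmType d o)), IsProbabilityMeasure π →
        ∫ v, ψ (fgmCombine v) ∂π
          = (∫⁻ v, ENNReal.ofReal (ψ (fgmCombine v) + C) ∂π).toReal - C := by
      intro π hπ
      have hint : Integrable (fun v => ψ (fgmCombine v)) π :=
        (integrable_const C).mono' (hψm.comp hcombm).aestronglyMeasurable
          (Filter.Eventually.of_forall fun v => by
            simpa [Real.norm_eq_abs] using hC (fgmCombine v))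
      have h1 : ∫ v, (ψ (fgmCombine v) + C) ∂π
          = (∫⁻ v, ENNReal.ofReal (ψ (fgmCombine v) + C) ∂π).toReal :=
        integral_eq_lintegral_of_nonneg_ae (Filter.Eventually.of_forall hg0)
          hgm.aestronglyMeasurable
      have h2 : ∫ v, (ψ (fgmCombine v) + C) ∂π = (∫ v, ψ (fgmCombine v) ∂π) + C := by
        rw [integral_add hint (integrable_const C), integral_const]
        simp
      linarith
    have hfinν : ∫⁻ v, ENNReal.ofReal (ψ (fgmCombine v) + C) ∂(Measure.pi ν)
        ≤ ENNReal.ofReal (2 * C) := by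
      calc ∫⁻ v, ENNReal.ofReal (ψ (fgmCombine v) + C) ∂(Measure.pi ν)
          ≤ ∫⁻ _, ENNReal.ofReal (2 * C) ∂(Measure.pi ν) :=
            lintegral_mono fun v => ENNReal.ofReal_le_ofReal (hgle v)
        _ = ENNReal.ofReal (2 * C) := by simp
    -- equality of Bernoulli marginals
    have hnone : μ none = ν none := map_eq_of_fin P I I' hI hI' hsame
    -- bounds on F and G
    have htoReal_le_one : ∀ s : Set Ω, (P s).toReal ≤ 1 := by
      intro s
      have h := ENNReal.toReal_mono ENNReal.one_ne_top (prob_le_one (μ := P) (s := s))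
      simpa using h
    have hF01 : ∀ k x, 0 ≤ F k x ∧ F k x ≤ 1 := by
      intro k x
      have hsq : (F k x) ^ 2 ≤ 1 := by rw [← hXcdf_max k x]; exact htoReal_le_one _
      have hsq' : (1 - F k x) ^ 2 ≤ 1 := by
        have h0 : (0:ℝ) ≤ 1 - (1 - F k x) ^ 2 := by
          rw [← hXcdf_min k x]; exact ENNReal.toReal_nonneg
        linarith
      have hF0 : 0 ≤ F k x := by nlinarith [sq_nonneg (F k x)]
      have hF1 : F k x ≤ 1 := by nlinarith [sq_nonneg (1 - F k x)]
      exact ⟨hF0, hF1⟩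
    have hG01 : ∀ k x, 0 ≤ G k x ∧ G k x ≤ 1 := by
      intro k x
      have hsq : (G k x) ^ 2 ≤ 1 := by rw [← hYcdf_max k x]; exact htoReal_le_one _
      have hsq' : (1 - G k x) ^ 2 ≤ 1 := by
        have h0 : (0:ℝ) ≤ 1 - (1 - G k x) ^ 2 := by
          rw [← hYcdf_min k x]; exact ENNReal.toReal_nonneg
        linarith
      have hG0 : 0 ≤ G k x := by nlinarith [sq_nonneg (G k x)]
      have hG1 : G k x ≤ 1 := by nlinarith [sq_nonneg (1 - G k x)]
      exact ⟨hG0, hG1⟩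
    -- cdf comparison for the continuous marginals
    have hcdf : ∀ (k : Fin d) (j : Fin 2) (x : ℝ),
        ν (some (k, j)) (Set.Iic x : Set ℝ) ≤ μ (some (k, j)) (Set.Iic x : Set ℝ) := by
      intro k j x
      have hμa : μ (some (k, j)) (Set.Iic x : Set ℝ) = P {ω | X j k ω ≤ x} :=
        Measure.map_apply (hX j k) measurableSet_Iic
      have hνa : ν (some (k, j)) (Set.Iic x : Set ℝ) = P {ω | Y j k ω ≤ x} :=
        Measure.map_apply (hY j k) measurableSet_Iic
      rw [hμa, hνa, ← ENNReal.toReal_le_toReal (measure_ne_top _ _) (measure_ne_top _ _)]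
      have hj : j = 0 ∨ j = 1 := by fin_cases j <;> simp
      rcases hj with rfl | rfl
      · rw [hYcdf_min, hXcdf_min]
        nlinarith [(hF01 k x).1, (hF01 k x).2, (hG01 k x).1, (hG01 k x).2, hGF k x]
      · rw [hYcdf_max, hXcdf_max]
        nlinarith [(hF01 k x).1, (hF01 k x).2, (hG01 k x).1, (hG01 k x).2, hGF k x]
    -- the key comparison of lintegrals over the product measures
    have hmain : ∫⁻ v, ENNReal.ofReal (ψ (fgmCombine v) + C) ∂(Measure.pi μ)
        ≤ ∫⁻ v, ENNReal.ofReal (ψ (fgmCombine v) + C) ∂(Measure.pi ν) := by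
      apply lintegral_pi_mono μ ν hgm.ennreal_ofReal
      intro o x
      cases o with
      | none => rw [hnone]
      | some p =>
        obtain ⟨k, j⟩ := p
        exact @lintegral_ofReal_mono_of_cdf _ _ (hμp _) (hνp _) (hcdf k j) _
          (fun t => hg0 _)
          (fun t t' htt' => by
            have := hψmono _ _ (fun k' => fgmCombine_update_mono x (k, j) htt' k')
            linarith)
    -- conclusion
    rw [hrwX, hrwY, hlink (Measure.pi μ) inferInstance, hlink (Measure.pi ν) inferInstance]
    apply sub_le_sub_right
    exact ENNReal.toReal_mono (ne_top_of_le_ne_top ENNReal.ofReal_ne_top hfinν) hmain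
  refine ⟨main, ?_⟩
  rintro φ hφm hφb hφmono
  have hsum : Measurable fun x : Fin d → ℝ => ∑ k, x k :=
    Finset.measurable_sum _ fun k _ => measurable_pi_apply k
  have := main (fun x => φ (∑ k, x k)) (hφm.comp hsum)
    (hφb.imp fun C hC x => hC _)
    (fun a b hab => hφmono (Finset.sum_le_sum fun k _ => hab k))
  exact this
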